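/- Let (Ω, 𝒜, μ) be a σ-finite measure space and K ∈ (0, μ(Ω)). Then { s ∈ L^∞(Ω) : ‖s‖_∞ ≤ 1, μ(supp s) ≤ K } ⊆ ∂|·|_K(0) ⊆ { s ∈ L^∞(Ω) : ‖s‖_∞ ≤ 1, ‖s‖_1 ≤ K }, where ∂|·|_K(0) is the convex subdifferential of the largest-K-norm at 0 in L^1(Ω). -/

import Mathlib

open MeasureTheory Set
open scoped ENNReal

/-- The largest-K-norm: `|u|_K = sup { ∫_A |u| dμ : A measurable, μ(A) ≤ K }`. -/
noncomputable def largestK {Ω : Type*} [MeasurableSpace Ω] (μ : Measure Ω) (K : ℝ≥0∞)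
    (u : Ω → ℝ) : ℝ :=
  sSup {r : ℝ | ∃ A : Set Ω, MeasurableSet A ∧ μ A ≤ K ∧ r = ∫ x in A, |u x| ∂μ}

lemma largestK_set_nonempty {Ω : Type*} [MeasurableSpace Ω] (μ : Measure Ω) (K : ℝ≥0∞)
    (u : Ω → ℝ) :
    {r : ℝ | ∃ A : Set Ω, MeasurableSet A ∧ μ A ≤ K ∧ r = ∫ x in A, |u x| ∂μ}.Nonempty :=
  ⟨0, ∅, MeasurableSet.empty, by simp, by simp⟩

lemma largestK_set_bddAbove {Ω : Type*} [MeasurableSpace Ω] {μ : Measure Ω} {K : ℝ≥0∞}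
    {u : Ω → ℝ} (hu : Integrable u μ) :
    BddAbove {r : ℝ | ∃ A : Set Ω, MeasurableSet A ∧ μ A ≤ K ∧ r = ∫ x in A, |u x| ∂μ} := by
  refine ⟨∫ x, |u x| ∂μ, ?_⟩
  rintro r ⟨A, hA, hAK, rfl⟩
  exact setIntegral_le_integral hu.abs (Filter.Eventually.of_forall fun x => abs_nonneg _)

lemma largestK_le_integral_abs {Ω : Type*} [MeasurableSpace Ω] {μ : Measure Ω} {K : ℝ≥0∞}
    {u : Ω → ℝ} (hu : Integrable u μ) : largestK μ K u ≤ ∫ x, |u x| ∂μ := by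
  refine csSup_le (largestK_set_nonempty μ K u) ?_
  rintro r ⟨A, hA, hAK, rfl⟩
  exact setIntegral_le_integral hu.abs (Filter.Eventually.of_forall fun x => abs_nonneg _)

lemma le_largestK {Ω : Type*} [MeasurableSpace Ω] {μ : Measure Ω} {K : ℝ≥0∞}
    {u : Ω → ℝ} (hu : Integrable u μ) {A : Set Ω} (hA : MeasurableSet A) (hAK : μ A ≤ K) :
    ∫ x in A, |u x| ∂μ ≤ largestK μ K u :=
  le_csSup (largestK_set_bddAbove hu) ⟨A, hA, hAK, rfl⟩

lemma largestK_le_toReal {Ω : Type*} [MeasurableSpace Ω] {μ : Measure Ω} {K : ℝ≥0∞}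
    (hKtop : K ≠ ∞) {u : Ω → ℝ} (hu : Integrable u μ) (hub : ∀ x, |u x| ≤ 1) :
    largestK μ K u ≤ K.toReal := by
  refine csSup_le (largestK_set_nonempty μ K u) ?_
  rintro r ⟨A, hA, hAK, rfl⟩
  have hAfin : μ A < ∞ := lt_of_le_of_lt hAK (lt_top_iff_ne_top.2 hKtop)
  have h1 : ∫ x in A, |u x| ∂μ ≤ ∫ x in A, (1 : ℝ) ∂μ :=
    setIntegral_mono hu.abs.integrableOn (integrableOn_const hAfin.ne) hub
  have h2 : ∫ x in A, (1 : ℝ) ∂μ = (μ A).toReal := by simp [measureReal_def]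
  refine h1.trans ?_
  rw [h2]
  exact ENNReal.toReal_mono hKtop hAK

/-- for a σ-finite space, `s ∈ L^∞`, the inclusions
`{ ‖s‖_∞ ≤ 1, μ(supp s) ≤ K } ⊆ ∂|·|_K(0) ⊆ { ‖s‖_∞ ≤ 1, ‖s‖₁ ≤ K }` hold, where
`∂|·|_K(0) = { s : ∫ s v dμ ≤ |v|_K for all v ∈ L¹ }`. -/
theorem stmt16 {Ω : Type*} [MeasurableSpace Ω] (μ : Measure Ω) [SigmaFinite μ]
    (K : ℝ≥0∞) (hK0 : 0 < K) (hK : K < μ Set.univ)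
    (s : Ω → ℝ) (hs : MemLp s ∞ μ) :
    ((eLpNorm s ∞ μ ≤ 1 ∧ μ (Function.support s) ≤ K) →
      ∀ v : Ω → ℝ, Integrable v μ → (∫ x, s x * v x ∂μ) ≤ largestK μ K v) ∧
    ((∀ v : Ω → ℝ, Integrable v μ → (∫ x, s x * v x ∂μ) ≤ largestK μ K v) →
      eLpNorm s ∞ μ ≤ 1 ∧ (∫⁻ x, ‖s x‖₊ ∂μ) ≤ K) := by
  have hKtop : K ≠ ∞ := hK.ne_top
  constructor
  · -- First inclusion
    rintro ⟨hs1, hsupp⟩ v hv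
    set A := toMeasurable μ (Function.support s) with hAdef
    have hA : MeasurableSet A := measurableSet_toMeasurable μ _
    have hAK : μ A ≤ K := by
      rw [hAdef, measure_toMeasurable]; exact hsupp
    have hbd : ∀ᵐ x ∂μ, ‖s x‖ ≤ 1 := by
      filter_upwards [ae_le_eLpNormEssSup (f := s) (μ := μ)] with x hx
      have hx1 : (‖s x‖₊ : ℝ≥0∞) ≤ 1 := hx.trans (by rwa [eLpNorm_exponent_top] at hs1)
      have : ‖s x‖₊ ≤ 1 := by exact_mod_cast hx1
      exact_mod_cast this
    have hsv : Integrable (fun x => s x * v x) μ :=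
      hv.bdd_mul hs.aestronglyMeasurable hbd
    have heq : ∫ x, s x * v x ∂μ = ∫ x in A, s x * v x ∂μ := by
      rw [← integral_indicator hA]
      congr 1
      funext x
      by_cases hx : x ∈ A
      · simp [Set.indicator_of_mem hx]
      · have hsx : s x = 0 := by
          by_contra h
          exact hx (subset_toMeasurable μ _ h)
        simp [Set.indicator_of_notMem hx, hsx]
    have hle : ∫ x in A, s x * v x ∂μ ≤ ∫ x in A, |v x| ∂μ := by
      refine setIntegral_mono_ae hsv.integrableOn hv.abs.integrableOn ?_
      filter_upwards [hbd] with x hx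
      calc s x * v x ≤ |s x * v x| := le_abs_self _
        _ = |s x| * |v x| := abs_mul _ _
        _ ≤ 1 * |v x| := by
            apply mul_le_mul_of_nonneg_right _ (abs_nonneg _)
            rwa [Real.norm_eq_abs] at hx
        _ = |v x| := one_mul _
    exact heq ▸ hle.trans (le_largestK hv hA hAK)
  · -- Second inclusion
    intro h
    obtain ⟨g, hgmeas, hgs⟩ : ∃ g, StronglyMeasurable g ∧ s =ᵐ[μ] g :=
      ⟨hs.aestronglyMeasurable.mk s, hs.aestronglyMeasurable.stronglyMeasurable_mk,
        hs.aestronglyMeasurable.ae_eq_mk⟩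
    have hgm : Measurable g := hgmeas.measurable
    have hg : MemLp g ∞ μ := hs.ae_eq hgs
    -- key construction: for a measurable set B, the "sign" test function
    have key : ∀ B : Set Ω, MeasurableSet B → μ B ≠ ∞ →
        IntegrableOn g B μ ∧
        (∫ x in B, |g x| ∂μ ≤ largestK μ K (B.indicator fun x => if 0 ≤ g x then (1:ℝ) else -1)) ∧
        Integrable (B.indicator fun x => if 0 ≤ g x then (1:ℝ) else -1) μ := by
      intro B hB hBfin
      set w : Ω → ℝ := fun x => if 0 ≤ g x then (1:ℝ) else -1 with hwdef
      have hw_meas : Measurable w :=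
        Measurable.ite (measurableSet_le measurable_const hgm) measurable_const measurable_const
      have hw_abs : ∀ x, |w x| = 1 := by
        intro x
        rw [hwdef]
        by_cases h0 : 0 ≤ g x <;> simp [h0]
      have hv_meas : Measurable (B.indicator w) := hw_meas.indicator hB
      have hv_int : Integrable (B.indicator w) μ := by
        refine ⟨hv_meas.aestronglyMeasurable, ?_⟩
        rw [hasFiniteIntegral_def]
        calc ∫⁻ x, ‖B.indicator w x‖₊ ∂μ
            ≤ ∫⁻ x, B.indicator (fun _ => (1:ℝ≥0∞)) x ∂μ := by
              refine lintegral_mono fun x => ?_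
              by_cases hx : x ∈ B
              · simp only [Set.indicator_of_mem hx]
                exact le_of_eq (by rw [← enorm_eq_nnnorm, Real.enorm_eq_ofReal_abs, hw_abs x, ENNReal.ofReal_one])
              · simp [Set.indicator_of_notMem hx]
          _ = μ B := by rw [lintegral_indicator hB]; simp
          _ < ∞ := lt_top_iff_ne_top.2 hBfin
      have hgB : IntegrableOn g B μ := by
        have hfin : IsFiniteMeasure (μ.restrict B) :=
          ⟨by rw [Measure.restrict_apply_univ]; exact lt_top_iff_ne_top.2 hBfin⟩
        exact (hg.restrict B).integrable le_top
      refine ⟨hgB, ?_, hv_int⟩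
      have heq2 : ∫ x, s x * B.indicator w x ∂μ = ∫ x in B, |g x| ∂μ := by
        have e1 : ∫ x, s x * B.indicator w x ∂μ = ∫ x, g x * B.indicator w x ∂μ := by
          refine integral_congr_ae ?_
          filter_upwards [hgs] with x hx
          rw [hx]
        rw [e1, ← integral_indicator hB]
        congr 1
        funext x
        by_cases hx : x ∈ B
        · rw [Set.indicator_of_mem hx, Set.indicator_of_mem hx, hwdef]
          by_cases h0 : 0 ≤ g x
          · simp [h0, abs_of_nonneg h0]
          · simp [h0, abs_of_neg (lt_of_not_ge h0)]
        · simp [Set.indicator_of_notMem hx]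
      exact heq2 ▸ h _ hv_int
    -- Part (a): essential sup bound
    have ha : eLpNorm s ∞ μ ≤ 1 := by
      -- the level sets are null
      have hnull : ∀ n : ℕ, μ {x | 1 + 1/(n+1 : ℝ) ≤ |g x|} = 0 := by
        intro n
        by_contra hpos
        have hEmeas : MeasurableSet {x | 1 + 1/(n+1 : ℝ) ≤ |g x|} :=
          measurableSet_le measurable_const hgm.abs
        obtain ⟨B, hBmeas, hBsub, hBpos, hBfin⟩ :=
          MeasureTheory.Measure.exists_subset_measure_lt_top hEmeas (pos_iff_ne_zero.2 hpos)
        obtain ⟨hgB, hkey, hv_int⟩ := key B hBmeas hBfin.ne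
        set w : Ω → ℝ := fun x => if 0 ≤ g x then (1:ℝ) else -1 with hwdef
        have hub : ∀ x, |B.indicator w x| ≤ 1 := by
          intro x
          by_cases hx : x ∈ B
          · rw [Set.indicator_of_mem hx]
            by_cases h0 : 0 ≤ g x <;> simp [hwdef, h0]
          · simp [Set.indicator_of_notMem hx]
        have habs : ∫ x, |B.indicator w x| ∂μ = (μ B).toReal := by
          have : (fun x => |B.indicator w x|) = B.indicator (fun _ => (1:ℝ)) := by
            funext x
            by_cases hx : x ∈ B
            · rw [Set.indicator_of_mem hx, Set.indicator_of_mem hx]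
              by_cases h0 : 0 ≤ g x <;> simp [hwdef, h0]
            · simp [Set.indicator_of_notMem hx]
          rw [this, integral_indicator_const (1:ℝ) hBmeas, smul_eq_mul, mul_one, measureReal_def]
        have hup : ∫ x in B, |g x| ∂μ ≤ (μ B).toReal := by
          calc ∫ x in B, |g x| ∂μ ≤ largestK μ K (B.indicator w) := hkey
            _ ≤ ∫ x, |B.indicator w x| ∂μ := largestK_le_integral_abs hv_int
            _ = (μ B).toReal := habs
        have hlo : (1 + 1/(n+1 : ℝ)) * (μ B).toReal ≤ ∫ x in B, |g x| ∂μ := by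
          have := setIntegral_mono_on (integrableOn_const hBfin.ne) hgB.abs hBmeas
            (fun x hx => hBsub hx)
          calc (1 + 1/(n+1 : ℝ)) * (μ B).toReal
              = ∫ _ in B, (1 + 1/(n+1 : ℝ)) ∂μ := by
                rw [setIntegral_const, smul_eq_mul, measureReal_def, mul_comm]
            _ ≤ ∫ x in B, |g x| ∂μ := this
        have hBtpos : 0 < (μ B).toReal := ENNReal.toReal_pos hBpos.ne' hBfin.ne
        have hcontra : (1 + 1/(n+1 : ℝ)) * (μ B).toReal ≤ 1 * (μ B).toReal := by
          rw [one_mul]; exact hlo.trans hup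
        have h1 : (1 + 1/(n+1 : ℝ)) ≤ 1 := le_of_mul_le_mul_right hcontra hBtpos
        have : (0:ℝ) < 1/(n+1 : ℝ) := by positivity
        linarith
      have hgle : ∀ᵐ x ∂μ, ‖g x‖ ≤ 1 := by
        have hsub : {x | ¬ ‖g x‖ ≤ 1} ⊆ ⋃ n : ℕ, {x | 1 + 1/(n+1 : ℝ) ≤ |g x|} := by
          intro x hx
          simp only [Set.mem_setOf_eq, not_le, Real.norm_eq_abs] at hx
          obtain ⟨n, hn⟩ := exists_nat_one_div_lt (sub_pos.2 hx)
          exact Set.mem_iUnion.2 ⟨n, by simp only [Set.mem_setOf_eq]; push_cast; linarith⟩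
        rw [ae_iff]
        exact measure_mono_null hsub (measure_iUnion_null fun n => hnull n)
      have : ∀ᵐ x ∂μ, ‖s x‖ ≤ 1 := by
        filter_upwards [hgs, hgle] with x hx hx1
        rw [hx]; exact hx1
      calc eLpNorm s ∞ μ = eLpNormEssSup s μ := eLpNorm_exponent_top
        _ ≤ ENNReal.ofReal 1 := eLpNormEssSup_le_of_ae_bound this
        _ = 1 := by simp
    refine ⟨ha, ?_⟩
    -- Part (b): L¹ bound
    have hcongr : ∫⁻ x, ‖s x‖₊ ∂μ = ∫⁻ x, ‖g x‖₊ ∂μ := by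
      refine lintegral_congr_ae ?_
      filter_upwards [hgs] with x hx
      rw [hx]
    rw [hcongr]
    refine lintegral_le_of_forall_fin_meas_le K fun B hB hBfin => ?_
    obtain ⟨hgB, hkey, hv_int⟩ := key B hB hBfin
    set w : Ω → ℝ := fun x => if 0 ≤ g x then (1:ℝ) else -1 with hwdef
    have hub : ∀ x, |B.indicator w x| ≤ 1 := by
      intro x
      by_cases hx : x ∈ B
      · rw [Set.indicator_of_mem hx]
        by_cases h0 : 0 ≤ g x <;> simp [hwdef, h0]
      · simp [Set.indicator_of_notMem hx]
    have hKbound : ∫ x in B, |g x| ∂μ ≤ K.toReal :=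
      hkey.trans (largestK_le_toReal hKtop hv_int hub)
    have hlint : ∫⁻ x in B, (‖g x‖₊ : ℝ≥0∞) ∂μ = ENNReal.ofReal (∫ x in B, |g x| ∂μ) := by
      rw [ofReal_integral_eq_lintegral_ofReal hgB.abs
        (Filter.Eventually.of_forall fun x => abs_nonneg _)]
      refine lintegral_congr fun x => ?_
      rw [← Real.enorm_eq_ofReal_abs, enorm_eq_nnnorm]
    rw [hlint]
    calc ENNReal.ofReal (∫ x in B, |g x| ∂μ) ≤ ENNReal.ofReal K.toReal :=
        ENNReal.ofReal_le_ofReal hKbound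
      _ = K := ENNReal.ofReal_toReal hKtop
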